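/- Fix an integer p ≥ 2 and work over ℚ: let t and D act on ℚⁿ by the same formulas. Then D^p − 1 restricts to a bijective linear map from the subspace {η ∈ ℚⁿ : η(1) = 0} onto the subspace {ξ ∈ ℚⁿ : ξ(n) = 0}: for every ξ ∈ ℚⁿ with ξ(n) = 0 there exists a unique η ∈ ℚⁿ with η(1) = 0 and (D^p − 1)η = ξ. -/

import Mathlib

/-!
`ℚⁿ` is the vector space of functions `Fin n → ℚ` (coordinates `1,…,n`
corresponding to indices `0,…,n-1`).  `shiftQ n` is the shift operator `t`,
`(tη)(i) = η(i+1)` for `i < n` and `(tη)(n) = 0`, and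
`DQ n = 1 + t + t² + … + t^{n−1}`.
-/

noncomputable section

/-- The shift operator `t` on `ℚⁿ`. -/
def shiftQ (n : ℕ) : Module.End ℚ (Fin n → ℚ) where
  toFun η i := if h : (i : ℕ) + 1 < n then η ⟨(i : ℕ) + 1, h⟩ else 0
  map_add' a b := by
    funext i
    by_cases h : (i : ℕ) + 1 < n <;> simp [h]
  map_smul' c a := by
    funext i
    by_cases h : (i : ℕ) + 1 < n <;> simp [h]

/-- The operator `D = 1 + t + t² + … + t^{n−1}` on `ℚⁿ`. -/
def DQ (n : ℕ) : Module.End ℚ (Fin n → ℚ) := ∑ i ∈ Finset.range n, shiftQ n ^ i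

namespace DpowAux

open Polynomial

variable {n : ℕ}

lemma shiftQ_apply (η : Fin n → ℚ) (i : Fin n) :
    shiftQ n η i = if h : (i : ℕ) + 1 < n then η ⟨(i : ℕ) + 1, h⟩ else 0 := rfl

lemma shiftQ_last (hn : 0 < n) (η : Fin n → ℚ) :
    shiftQ n η ⟨n - 1, by omega⟩ = 0 := by
  rw [shiftQ_apply]
  exact dif_neg (show ¬(n - 1 + 1 < n) by omega)

lemma shiftQ_pow_apply (k : ℕ) (η : Fin n → ℚ) (i : Fin n) :
    (shiftQ n ^ k) η i = if h : (i : ℕ) + k < n then η ⟨(i : ℕ) + k, h⟩ else 0 := by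
  induction k generalizing η with
  | zero => simp
  | succ k ih =>
    rw [pow_succ, Module.End.mul_apply, ih]
    by_cases h1 : (i : ℕ) + k < n
    · rw [dif_pos h1, shiftQ_apply]
      by_cases h2 : (i : ℕ) + k + 1 < n
      · rw [dif_pos h2, dif_pos (show (i : ℕ) + (k + 1) < n by omega)]
        congr 1
      · rw [dif_neg h2, dif_neg (show ¬((i : ℕ) + (k + 1) < n) by omega)]
    · rw [dif_neg h1, dif_neg (show ¬((i : ℕ) + (k + 1) < n) by omega)]

lemma shiftQ_pow_n : (shiftQ n) ^ n = 0 := by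
  apply LinearMap.ext
  intro η
  funext i
  rw [shiftQ_pow_apply, dif_neg (by omega)]
  rfl

lemma shiftQ_nilpotent : IsNilpotent (shiftQ n) := ⟨n, shiftQ_pow_n⟩

/-- Injectivity of the shift on `{η : η 0 = 0}`. -/
lemma shiftQ_inj (hn : 0 < n) {η η' : Fin n → ℚ} (h0 : η ⟨0, hn⟩ = 0)
    (h0' : η' ⟨0, hn⟩ = 0) (hT : shiftQ n η = shiftQ n η') : η = η' := by
  funext i
  by_cases hi : (i : ℕ) = 0
  · have : i = ⟨0, hn⟩ := Fin.ext hi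
    rw [this, h0, h0']
  · have hj : (i : ℕ) - 1 + 1 < n := by omega
    have h := congrFun hT ⟨(i : ℕ) - 1, by omega⟩
    rw [shiftQ_apply, shiftQ_apply, dif_pos hj, dif_pos hj] at h
    have hii : (⟨(i : ℕ) - 1 + 1, hj⟩ : Fin n) = i := Fin.ext (by simp; omega)
    rwa [hii] at h

/-- Surjectivity of the shift onto `{ξ : ξ (n-1) = 0}`. -/
lemma shiftQ_surj (hn : 0 < n) {ξ : Fin n → ℚ} (hξ : ξ ⟨n - 1, by omega⟩ = 0) :
    ∃ η : Fin n → ℚ, η ⟨0, hn⟩ = 0 ∧ shiftQ n η = ξ := by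
  refine ⟨fun i => if h : 0 < (i : ℕ) then ξ ⟨(i : ℕ) - 1, by omega⟩ else 0, by simp, ?_⟩
  funext i
  rw [shiftQ_apply]
  by_cases h : (i : ℕ) + 1 < n
  · rw [dif_pos h, dif_pos (by simp)]
    congr 1
  · rw [dif_neg h]
    have : i = ⟨n - 1, by omega⟩ := Fin.ext (by simp; omega)
    rw [this, hξ]

lemma commute_aeval (q r : ℚ[X]) :
    Commute (aeval (shiftQ n) q) (aeval (shiftQ n) r) :=
  (Commute.all q r).map (aeval (shiftQ n)).toRingHom

lemma isUnit_aeval (q : ℚ[X]) (hq : q.eval 0 ≠ 0) :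
    IsUnit (aeval (shiftQ n) q) := by
  have hqq : X * q.divX + C (q.coeff 0) = q := X_mul_divX_add q
  have h1 : aeval (shiftQ n) q
      = algebraMap ℚ _ (q.coeff 0) + shiftQ n * aeval (shiftQ n) q.divX := by
    conv_lhs => rw [← hqq]
    rw [map_add, map_mul, aeval_X, aeval_C, add_comm]
  rw [h1]
  have hcomm : Commute (shiftQ n) (aeval (shiftQ n) q.divX) := by
    have h := (Commute.all X q.divX).map (aeval (shiftQ n)).toRingHom
    simpa using h
  have hnil : IsNilpotent (shiftQ n * aeval (shiftQ n) q.divX) :=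
    hcomm.isNilpotent_mul_right shiftQ_nilpotent
  have hu : IsUnit (algebraMap ℚ (Module.End ℚ (Fin n → ℚ)) (q.coeff 0)) :=
    (IsUnit.mk0 _ (by rwa [coeff_zero_eq_eval_zero])).map (algebraMap ℚ _)
  exact IsNilpotent.isUnit_add_left_of_commute hnil hu
    ((Algebra.commutes (q.coeff 0) _).symm)

end DpowAux

/-- For `p ≥ 2`, the operator `D^p − 1` on `ℚⁿ` restricts to a bijection from the
subspace `{η : η(1) = 0}` onto the subspace `{ξ : ξ(n) = 0}`: it maps the former into
the latter, and for every `ξ` with `ξ(n) = 0` there is a unique `η` with `η(1) = 0`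
and `(D^p − 1)η = ξ`. -/
theorem Dpow_sub_one_bijective_rational (n : ℕ) (hn : 2 ≤ n) (p : ℕ) (hp : 2 ≤ p) :
    (∀ η : Fin n → ℚ, η ⟨0, by omega⟩ = 0 →
        ((DQ n ^ p - 1) η) ⟨n - 1, by omega⟩ = 0) ∧
    (∀ ξ : Fin n → ℚ, ξ ⟨n - 1, by omega⟩ = 0 →
        ∃! η : Fin n → ℚ, η ⟨0, by omega⟩ = 0 ∧ (DQ n ^ p - 1) η = ξ) := by
  have hn0 : 0 < n := by omega
  set d : Polynomial ℚ := ∑ i ∈ Finset.range n, Polynomial.X ^ i with hd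
  set s : Polynomial ℚ := (∑ k ∈ Finset.range p, d ^ k) * d with hs
  set S : Module.End ℚ (Fin n → ℚ) := Polynomial.aeval (shiftQ n) s with hSdef
  have hD : DQ n = Polynomial.aeval (shiftQ n) d := by
    simp [DQ, hd, map_sum, map_pow]
  have hS : S = (∑ k ∈ Finset.range p, DQ n ^ k) * DQ n := by
    rw [hD, hSdef, hs]
    simp [map_mul, map_sum, map_pow]
  -- D - 1 = D * T
  have hD1 : DQ n - 1 = DQ n * shiftQ n := by
    have h := geom_sum_mul (shiftQ n) n
    rw [DpowAux.shiftQ_pow_n, mul_sub, mul_one] at h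
    have h' : DQ n * shiftQ n = (0 : Module.End ℚ (Fin n → ℚ)) - 1 + DQ n :=
      sub_eq_iff_eq_add.mp h
    rw [h']
    abel
  have hcommTS : Commute (shiftQ n) S := by
    have h := DpowAux.commute_aeval (n := n) Polynomial.X s
    rwa [Polynomial.aeval_X] at h
  have hE2 : DQ n ^ p - 1 = S * shiftQ n := by
    have hgs := geom_sum_mul (DQ n) p
    rw [← hgs, hD1, hS, mul_assoc]
  have hE : DQ n ^ p - 1 = shiftQ n * S := by
    rw [hE2, ← hcommTS.eq]
  -- S is a unit
  have hd0 : d.eval 0 = 1 := by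
    rw [hd]
    simp only [Polynomial.eval_finset_sum, Polynomial.eval_pow, Polynomial.eval_X]
    rw [Finset.sum_eq_single 0]
    · simp
    · intro b _ hb; exact zero_pow hb
    · intro h; exact absurd (Finset.mem_range.mpr hn0) h
  have hs0 : s.eval 0 = (p : ℚ) := by
    rw [hs]
    simp [Polynomial.eval_finset_sum, hd0]
  have hSu : IsUnit S := DpowAux.isUnit_aeval s (by
    rw [hs0]
    exact Nat.cast_ne_zero.mpr (by omega))
  obtain ⟨u, hu⟩ := hSu
  set U : Module.End ℚ (Fin n → ℚ) := ↑u⁻¹ with hU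
  have hcommTu : Commute (shiftQ n) (↑u : Module.End ℚ (Fin n → ℚ)) := by
    rw [hu]; exact hcommTS
  have hcommTU : Commute (shiftQ n) U := hcommTu.units_inv_right
  have hSU : S * U = 1 := by rw [← hu, hU]; exact u.mul_inv
  have hUS : U * S = 1 := by rw [← hu, hU]; exact u.inv_mul
  constructor
  · intro η _
    rw [hE]
    exact DpowAux.shiftQ_last hn0 (S η)
  · intro ξ hξ
    obtain ⟨ρ, _, hρ⟩ := DpowAux.shiftQ_surj hn0 hξ
    have hUξlast : (U ξ) ⟨n - 1, by omega⟩ = 0 := by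
      have h2 : U ξ = shiftQ n (U ρ) := by
        calc U ξ = U (shiftQ n ρ) := by rw [hρ]
        _ = (U * shiftQ n) ρ := rfl
        _ = (shiftQ n * U) ρ := by rw [hcommTU.symm.eq]
        _ = shiftQ n (U ρ) := rfl
      rw [h2]
      exact DpowAux.shiftQ_last hn0 (U ρ)
    obtain ⟨η, hη0, hηeq⟩ := DpowAux.shiftQ_surj hn0 hUξlast
    refine ⟨η, ⟨hη0, ?_⟩, ?_⟩
    · rw [hE2]
      calc (S * shiftQ n) η = S (shiftQ n η) := rfl
      _ = S (U ξ) := by rw [hηeq]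
      _ = (S * U) ξ := rfl
      _ = ξ := by rw [hSU]; rfl
    · rintro η' ⟨hη'0, hη'eq⟩
      have hts : (S * shiftQ n) η' = ξ := by rw [← hE2]; exact hη'eq
      have h2 : shiftQ n η' = U ξ := by
        calc shiftQ n η' = ((U * S) * shiftQ n) η' := by rw [hUS, one_mul]
        _ = U ((S * shiftQ n) η') := by rw [mul_assoc]; rfl
        _ = U ξ := by rw [hts]
      exact DpowAux.shiftQ_inj hn0 hη'0 hη0 (h2.trans hηeq.symm)
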